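/- In the 3-dimensional model, the negation of the Euclidean parallel axiom holds for five-point lines: if l is a five-point line and X a point of the model not on l, then there are only finitely many lines of the model through X that intersect l, while there are infinitely many lines of the model through X; hence infinitely many lines through X miss l. -/
import Mathlib


open Real

noncomputable section

/-- The vertices of the regular pentagon in the horizontal plane of `ℝ³`. -/
def pentagonPt (k : Fin 5) : Fin 3 → ℝ :=
  ![Real.cos (2 * π * (k.val : ℝ) / 5), Real.sin (2 * π * (k.val : ℝ) / 5), 0]

/-- The vertical unit direction. -/
def e3 : Fin 3 → ℝ := ![0, 0, 1]

/-- The vertical line of the model over the `k`-th pentagon vertex. -/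
def vertLine (k : Fin 5) : Set (Fin 3 → ℝ) := {x | ∃ t : ℝ, x = pentagonPt k + t • e3}

/-- The points of the model: the union of the five vertical lines. -/
def ModelPoints : Set (Fin 3 → ℝ) := ⋃ k, vertLine k

/-- Euclidean dot product in `ℝ³`. -/
def dot (n x : Fin 3 → ℝ) : ℝ := n 0 * x 0 + n 1 * x 1 + n 2 * x 2

/-- A five-point line of the model: the trace on the model points of a plane through the
origin with non-horizontal normal (such a plane contains no vertical line). -/
def IsFivePointLine (l : Set (Fin 3 → ℝ)) : Prop :=
  ∃ n : Fin 3 → ℝ, n 2 ≠ 0 ∧ l = {x ∈ ModelPoints | dot n x = 0}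

/-- A line of the model: a vertical line or a five-point line. -/
def IsModelLine (l : Set (Fin 3 → ℝ)) : Prop :=
  (∃ k, l = vertLine k) ∨ IsFivePointLine l

lemma dot_vert (n : Fin 3 → ℝ) (k : Fin 5) (t : ℝ) :
    dot n (pentagonPt k + t • e3) =
      n 0 * Real.cos (2 * π * (k.val : ℝ) / 5) + n 1 * Real.sin (2 * π * (k.val : ℝ) / 5)
        + n 2 * t := by
  simp [dot, pentagonPt, e3]

lemma vert_coord2 (k : Fin 5) (t : ℝ) : (pentagonPt k + t • e3) 2 = t := by
  simp [pentagonPt, e3]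

lemma vert_coord0 (k : Fin 5) (t : ℝ) :
    (pentagonPt k + t • e3) 0 = Real.cos (2 * π * (k.val : ℝ) / 5) := by
  simp [pentagonPt, e3]

lemma vert_coord1 (k : Fin 5) (t : ℝ) :
    (pentagonPt k + t • e3) 1 = Real.sin (2 * π * (k.val : ℝ) / 5) := by
  simp [pentagonPt, e3]

lemma sin5 {j k : Fin 5} (h : j ≠ k) :
    Real.sin (2 * π * (j.val : ℝ) / 5 - 2 * π * (k.val : ℝ) / 5) ≠ 0 := by
  intro h0
  rw [Real.sin_eq_zero_iff] at h0
  obtain ⟨m, hm⟩ := h0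
  have hπ : (π : ℝ) ≠ 0 := Real.pi_ne_zero
  have h2 : (m : ℝ) * 5 = 2 * (j.val : ℝ) - 2 * (k.val : ℝ) := by
    have := Real.pi_pos
    apply mul_right_cancel₀ hπ
    nlinarith [hm]
  have h3 : (m : ℤ) * 5 = 2 * (j.val : ℤ) - 2 * (k.val : ℤ) := by exact_mod_cast h2
  have hj := j.isLt
  have hk := k.isLt
  have hjk : j.val ≠ k.val := fun hh => h (Fin.ext hh)
  omega
lemma vert_eq {x : Fin 3 → ℝ} {j k : Fin 5} (hj : x ∈ vertLine j) (hk : x ∈ vertLine k) :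
    j = k := by
  obtain ⟨t, rfl⟩ := hj
  obtain ⟨s, hs⟩ := hk
  by_contra hne
  have h0 : Real.cos (2 * π * (j.val : ℝ) / 5) = Real.cos (2 * π * (k.val : ℝ) / 5) := by
    have := congrFun hs 0
    rwa [vert_coord0, vert_coord0] at this
  have h1 : Real.sin (2 * π * (j.val : ℝ) / 5) = Real.sin (2 * π * (k.val : ℝ) / 5) := by
    have := congrFun hs 1
    rwa [vert_coord1, vert_coord1] at this
  apply sin5 hne
  rw [Real.sin_sub, h0, h1]
  ring

lemma vert_unique {x y : Fin 3 → ℝ} {k : Fin 5} {n : Fin 3 → ℝ} (hn : n 2 ≠ 0)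
    (hx : x ∈ vertLine k) (hy : y ∈ vertLine k) (hdx : dot n x = 0) (hdy : dot n y = 0) :
    x = y := by
  obtain ⟨t, rfl⟩ := hx
  obtain ⟨s, rfl⟩ := hy
  rw [dot_vert] at hdx hdy
  have : t = s := by
    have h2 : n 2 * t = n 2 * s := by linarith
    exact mul_left_cancel₀ hn h2
  rw [this]
lemma mem_model {X : Fin 3 → ℝ} (h : X ∈ ModelPoints) :
    ∃ (k : Fin 5) (t : ℝ), X = pentagonPt k + t • e3 := by
  obtain ⟨k, hk⟩ := Set.mem_iUnion.mp h
  obtain ⟨t, rfl⟩ := hk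
  exact ⟨k, t, rfl⟩

lemma fpl_unique {X Y : Fin 3 → ℝ} (hne : X ≠ Y) {l1 l2 : Set (Fin 3 → ℝ)}
    (h1 : IsFivePointLine l1) (h2 : IsFivePointLine l2)
    (hX1 : X ∈ l1) (hY1 : Y ∈ l1) (hX2 : X ∈ l2) (hY2 : Y ∈ l2) : l1 = l2 := by
  obtain ⟨m, hm2, rfl⟩ := h1
  obtain ⟨n, hn2, rfl⟩ := h2
  obtain ⟨hXM, e1⟩ := hX1
  obtain ⟨hYM, e2⟩ := hY1
  obtain ⟨-, f1⟩ := hX2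
  obtain ⟨-, f2⟩ := hY2
  obtain ⟨k, t, rfl⟩ := mem_model hXM
  obtain ⟨j, s, rfl⟩ := mem_model hYM
  rw [dot_vert] at e1 e2 f1 f2
  set a := 2 * π * (k.val : ℝ) / 5 with ha
  set b := 2 * π * (j.val : ℝ) / 5 with hb
  by_cases hkj : k = j
  · -- no five-point line contains two points of the same vertical: contradiction
    subst hkj
    exfalso
    apply hne
    have hab : b = a := hb.trans ha.symm
    rw [hab] at e2
    have : t = s := mul_left_cancel₀ hm2 (by linarith)
    rw [this]
  · have hD : Real.cos a * Real.sin b - Real.sin a * Real.cos b ≠ 0 := by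
      intro h0
      apply sin5 hkj
      rw [Real.sin_sub]
      linarith
    obtain ⟨c, hc⟩ : ∃ c : ℝ, c * n 2 = m 2 := ⟨m 2 / n 2, div_mul_cancel₀ _ hn2⟩
    have hp : m 0 - c * n 0 = 0 := by
      have key : (m 0 - c * n 0) * (Real.cos a * Real.sin b - Real.sin a * Real.cos b) = 0 := by
        linear_combination Real.sin b * e1 - Real.sin a * e2 - c * Real.sin b * f1
          + c * Real.sin a * f2 + (t * Real.sin b - s * Real.sin a) * hc
      rcases mul_eq_zero.mp key with h' | h'
      · exact h'
      · exact absurd h' hD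
    have hq : m 1 - c * n 1 = 0 := by
      have key : (m 1 - c * n 1) * (Real.cos a * Real.sin b - Real.sin a * Real.cos b) = 0 := by
        linear_combination Real.cos a * e2 - Real.cos b * e1 + c * Real.cos b * f1
          - c * Real.cos a * f2 + (s * Real.cos a - t * Real.cos b) * hc
      rcases mul_eq_zero.mp key with h' | h'
      · exact h'
      · exact absurd h' hD
    have hcne : c ≠ 0 := by
      intro h0
      rw [h0, zero_mul] at hc
      exact hm2 hc.symm
    have key : ∀ x : Fin 3 → ℝ, dot m x = c * dot n x := by
      intro x
      simp only [dot]
      linear_combination x 0 * hp + x 1 * hq + x 2 * hc.symm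
    ext x
    simp only [Set.mem_setOf_eq, key, mul_eq_zero, and_congr_right_iff]
    intro _
    constructor
    · rintro (h' | h')
      · exact absurd h' hcne
      · exact h'
    · exact fun h' => Or.inr h'
lemma vert_mem_model {k : Fin 5} {x : Fin 3 → ℝ} (h : x ∈ vertLine k) : x ∈ ModelPoints :=
  Set.mem_iUnion.mpr ⟨k, h⟩

/-- The negation of the Euclidean parallel axiom for five-point lines: if `l` is a
five-point line and `X` a model point not on `l`, then only finitely many model lines
through `X` meet `l`, while there are infinitely many model lines through `X`; hence
infinitely many model lines through `X` miss `l`. -/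
theorem model_many_parallels :
    ∀ l : Set (Fin 3 → ℝ), IsFivePointLine l →
    ∀ X : Fin 3 → ℝ, X ∈ ModelPoints → X ∉ l →
      {L : Set (Fin 3 → ℝ) | IsModelLine L ∧ X ∈ L ∧ (L ∩ l).Nonempty}.Finite ∧
      {L : Set (Fin 3 → ℝ) | IsModelLine L ∧ X ∈ L}.Infinite ∧
      {L : Set (Fin 3 → ℝ) | IsModelLine L ∧ X ∈ L ∧ L ∩ l = ∅}.Infinite := by
  intro l hl X hX hXl
  obtain ⟨n, hn2, hldef⟩ := hl
  -- l is finite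
  have hlsub : l ⊆ Set.range (fun k : Fin 5 =>
      pentagonPt k + (-(n 0 * Real.cos (2 * π * (k.val : ℝ) / 5)
        + n 1 * Real.sin (2 * π * (k.val : ℝ) / 5)) / n 2) • e3) := by
    intro x hx
    rw [hldef] at hx
    obtain ⟨hxM, hdx⟩ := hx
    obtain ⟨k, t, rfl⟩ := mem_model hxM
    refine ⟨k, ?_⟩
    rw [dot_vert] at hdx
    have ht : t = -(n 0 * Real.cos (2 * π * (k.val : ℝ) / 5)
        + n 1 * Real.sin (2 * π * (k.val : ℝ) / 5)) / n 2 := by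
      field_simp
      linarith
    simp only [ht]
  have hlfin : l.Finite := (Set.finite_range _).subset hlsub
  -- Part 1 : finitely many lines through X meeting l
  have part1 : {L : Set (Fin 3 → ℝ) | IsModelLine L ∧ X ∈ L ∧ (L ∩ l).Nonempty}.Finite := by
    have hsub : {L : Set (Fin 3 → ℝ) | IsModelLine L ∧ X ∈ L ∧ (L ∩ l).Nonempty} ⊆
        ⋃ y ∈ l, {L : Set (Fin 3 → ℝ) | IsModelLine L ∧ X ∈ L ∧ y ∈ L} := by
      rintro L ⟨hL, hXL, y, hyL, hyl⟩
      exact Set.mem_biUnion hyl ⟨hL, hXL, hyL⟩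
    refine Set.Finite.subset (Set.Finite.biUnion hlfin ?_) hsub
    intro y hy
    have hXy : X ≠ y := fun h => hXl (h ▸ hy)
    have hyM : y ∈ ModelPoints := by
      rw [hldef] at hy
      exact hy.1
    have hsub2 : {L : Set (Fin 3 → ℝ) | IsModelLine L ∧ X ∈ L ∧ y ∈ L} ⊆
        {L : Set (Fin 3 → ℝ) | (∃ k, L = vertLine k) ∧ X ∈ L} ∪
        {L : Set (Fin 3 → ℝ) | IsFivePointLine L ∧ X ∈ L ∧ y ∈ L} := by
      rintro L ⟨hL | hL, hXL, hyL⟩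
      · exact Or.inl ⟨hL, hXL⟩
      · exact Or.inr ⟨hL, hXL, hyL⟩
    refine Set.Finite.subset (Set.Finite.union ?_ ?_) hsub2
    · apply Set.Subsingleton.finite
      rintro L1 ⟨⟨k1, rfl⟩, hX1⟩ L2 ⟨⟨k2, rfl⟩, hX2⟩
      rw [vert_eq hX1 hX2]
    · apply Set.Subsingleton.finite
      rintro L1 ⟨hf1, hX1, hy1⟩ L2 ⟨hf2, hX2, hy2⟩
      exact fpl_unique hXy hf1 hf2 hX1 hy1 hX2 hy2
  -- Part 2 : infinitely many lines through X
  obtain ⟨k₀, t, rfl⟩ := mem_model hX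
  set a := 2 * π * (k₀.val : ℝ) / 5 with ha
  have hjk : (k₀ + 1 : Fin 5) ≠ k₀ := by
    intro h
    have := Fin.val_eq_of_eq h
    simp [Fin.val_add] at this
    omega
  set j : Fin 5 := k₀ + 1 with hj
  set b := 2 * π * (j.val : ℝ) / 5 with hb
  set N : ℝ → (Fin 3 → ℝ) := fun s =>
    ![Real.sin a * s - t * Real.sin b, t * Real.cos b - Real.cos a * s,
      Real.cos a * Real.sin b - Real.sin a * Real.cos b] with hN
  have hN0 : ∀ s, N s 0 = Real.sin a * s - t * Real.sin b := fun s => rfl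
  have hN1 : ∀ s, N s 1 = t * Real.cos b - Real.cos a * s := fun s => rfl
  have hN2' : ∀ s, N s 2 = Real.cos a * Real.sin b - Real.sin a * Real.cos b := fun s => rfl
  have hNne : ∀ s, N s 2 ≠ 0 := by
    intro s h0
    rw [hN2' s] at h0
    apply sin5 hjk
    rw [Real.sin_sub]
    rw [← hb, ← ha]
    linarith
  have hdotX : ∀ s, dot (N s) (pentagonPt k₀ + t • e3) = 0 := by
    intro s
    rw [dot_vert, hN0, hN1, hN2', ← ha]
    ring
  have hdotY : ∀ s, dot (N s) (pentagonPt j + s • e3) = 0 := by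
    intro s
    rw [dot_vert, hN0, hN1, hN2', ← hb]
    ring
  set L : ℝ → Set (Fin 3 → ℝ) := fun s => {x ∈ ModelPoints | dot (N s) x = 0} with hL
  have hLmem : ∀ s, L s ∈ {L : Set (Fin 3 → ℝ) | IsModelLine L ∧ pentagonPt k₀ + t • e3 ∈ L} := by
    intro s
    exact ⟨Or.inr ⟨N s, hNne s, rfl⟩, hX, hdotX s⟩
  have hYmemL : ∀ s, pentagonPt j + s • e3 ∈ L s := by
    intro s
    exact ⟨vert_mem_model ⟨s, rfl⟩, hdotY s⟩
  have hLinj : Function.Injective L := by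
    intro s s' hss
    have h1 : pentagonPt j + s • e3 ∈ L s' := hss ▸ hYmemL s
    have h2 : pentagonPt j + s' • e3 ∈ L s' := hYmemL s'
    have := vert_unique (hNne s') ⟨s, rfl⟩ ⟨s', rfl⟩ h1.2 h2.2
    have := congrFun this 2
    rwa [vert_coord2, vert_coord2] at this
  have part2 : {L : Set (Fin 3 → ℝ) | IsModelLine L ∧ pentagonPt k₀ + t • e3 ∈ L}.Infinite :=
    Set.infinite_of_injective_forall_mem hLinj hLmem
  refine ⟨part1, part2, ?_⟩
  have heq : {L : Set (Fin 3 → ℝ) | IsModelLine L ∧ pentagonPt k₀ + t • e3 ∈ L ∧ L ∩ l = ∅} =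
      {L : Set (Fin 3 → ℝ) | IsModelLine L ∧ pentagonPt k₀ + t • e3 ∈ L} \
      {L : Set (Fin 3 → ℝ) | IsModelLine L ∧ pentagonPt k₀ + t • e3 ∈ L ∧ (L ∩ l).Nonempty} := by
    ext L
    simp only [Set.mem_setOf_eq, Set.mem_diff, ← Set.not_nonempty_iff_eq_empty]
    tauto
  rw [heq]
  exact part2.diff part1

end
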